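/- Let G be a D-regular Bonnet-Myers sharp graph of diameter L with pole x_0. For any two vertices x_1, x̄_1 ∈ S_1(x_0) which are neither equal nor adjacent, there exists a unique vertex x_2 ∈ S_2(x_0) adjacent to both x_1 and x̄_1. -/

import Mathlib

open Finset

namespace BMS

open scoped Classical
set_option linter.unusedSectionVars false

variable {V : Type*}

/-- The uniform probability measure on the closed 1-ball of `x` in a `D`-regular graph. -/
noncomputable def mu (G : SimpleGraph V) (D : ℕ) (x : V) : V → ℝ :=
  fun v => if G.dist x v ≤ 1 then 1 / (D + 1) else 0

/-- The L¹-Wasserstein distance between `μ_x` and `μ_y`, as an infimum over transport plans. -/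
noncomputable def W1 (G : SimpleGraph V) [Fintype V] (D : ℕ) (x y : V) : ℝ :=
  sInf { c : ℝ | ∃ π : V → V → ℝ,
    (∀ u v, 0 ≤ π u v) ∧
    (∀ u, ∑ v, π u v = mu G D x u) ∧
    (∀ v, ∑ u, π u v = mu G D y v) ∧
    c = ∑ u, ∑ v, (G.dist u v : ℝ) * π u v }

/-- Ollivier Ricci curvature (Lin–Lu–Yau normalization for regular graphs). -/
noncomputable def kappa (G : SimpleGraph V) [Fintype V] (D : ℕ) (x y : V) : ℝ :=
  ((D + 1) / D) * (1 - W1 G D x y)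

/-- `G` is Bonnet–Myers sharp: the infimum of the curvature over edges equals `2 / L`. -/
def BMSharp (G : SimpleGraph V) [Fintype V] (D L : ℕ) : Prop :=
  sInf { k : ℝ | ∃ x y, G.Adj x y ∧ k = kappa G D x y } = 2 / (L : ℝ)

/-! ### auxiliary definitions -/

/-- A transport plan between `μ_a` and `μ_b`. -/
def IsPlan (G : SimpleGraph V) [Fintype V] (D : ℕ) (a b : V) (π : V → V → ℝ) : Prop :=
  (∀ u v, 0 ≤ π u v) ∧ (∀ u, ∑ v, π u v = mu G D a u) ∧ (∀ v, ∑ u, π u v = mu G D b v)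

/-- Cost of a transport plan. -/
noncomputable def cst (G : SimpleGraph V) [Fintype V] (π : V → V → ℝ) : ℝ :=
  ∑ u, ∑ v, (G.dist u v : ℝ) * π u v

lemma W1_eq_sInf (G : SimpleGraph V) [Fintype V] (D : ℕ) (x y : V) :
    W1 G D x y = sInf { c : ℝ | ∃ π : V → V → ℝ, IsPlan G D x y π ∧ c = cst G π } := by
  unfold W1 IsPlan cst
  congr 1
  ext c
  constructor
  · rintro ⟨π, h1, h2, h3, h4⟩; exact ⟨π, ⟨h1, h2, h3⟩, h4⟩
  · rintro ⟨π, ⟨h1, h2, h3⟩, h4⟩; exact ⟨π, h1, h2, h3, h4⟩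

section Basics

variable [Fintype V] {G : SimpleGraph V} {D L : ℕ}

lemma Dp1_pos : (0:ℝ) < (D:ℝ) + 1 := by positivity

lemma mu_nonneg (x v : V) : 0 ≤ mu G D x v := by
  unfold mu; split <;> positivity

lemma mu_cases (x v : V) : mu G D x v = 0 ∨ mu G D x v = 1 / ((D:ℝ) + 1) := by
  unfold mu; split
  · right; norm_num
  · left; rfl

lemma mu_eq_of_le (x v : V) (h : G.dist x v ≤ 1) : mu G D x v = 1 / ((D:ℝ) + 1) := by
  unfold mu; rw [if_pos h]

lemma mu_eq_zero (x v : V) (h : ¬ G.dist x v ≤ 1) : mu G D x v = 0 := by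
  unfold mu; rw [if_neg h]

lemma mu_ne_zero_iff (x v : V) : mu G D x v ≠ 0 ↔ G.dist x v ≤ 1 := by
  unfold mu
  constructor
  · intro h; by_contra hc; rw [if_neg hc] at h; exact h rfl
  · intro h; rw [if_pos h]
    have := @Dp1_pos D
    positivity

/-- The closed unit ball as a finset. -/
noncomputable def ballF (G : SimpleGraph V) [Fintype V] (x : V) : Finset V :=
  insert x (G.neighborFinset x)

lemma dist_le_one_iff (hconn : G.Connected) (x v : V) :
    G.dist x v ≤ 1 ↔ v = x ∨ G.Adj x v := by
  constructor
  · intro h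
    interval_cases hd : G.dist x v
    · left; exact ((hconn.dist_eq_zero_iff).mp hd).symm
    · right; exact SimpleGraph.dist_eq_one_iff_adj.mp hd
  · rintro (rfl | h)
    · simp [SimpleGraph.dist_self]
    · exact le_of_eq (SimpleGraph.dist_eq_one_iff_adj.mpr h)

lemma mem_ballF (hconn : G.Connected) (x v : V) :
    v ∈ ballF G x ↔ G.dist x v ≤ 1 := by
  rw [ballF, Finset.mem_insert, SimpleGraph.mem_neighborFinset, dist_le_one_iff hconn]

lemma card_ballF (hreg : G.IsRegularOfDegree D) (x : V) : (ballF G x).card = D + 1 := by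
  rw [ballF, Finset.card_insert_of_notMem (G.notMem_neighborFinset_self x),
    G.card_neighborFinset_eq_degree, hreg x]

lemma sum_mu_mul (hconn : G.Connected) (x : V) (f : V → ℝ) :
    ∑ v, mu G D x v * f v = (1 / ((D:ℝ) + 1)) * ∑ v ∈ ballF G x, f v := by
  rw [Finset.mul_sum]
  rw [← Finset.sum_subset (Finset.subset_univ (ballF G x))]
  · apply Finset.sum_congr rfl
    intro v hv
    rw [mu_eq_of_le x v ((mem_ballF hconn x v).mp hv)]
  · intro v _ hv
    rw [mu_eq_zero x v (fun h => hv ((mem_ballF hconn x v).mpr h)), zero_mul]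

lemma sum_ballF (x : V) (f : V → ℝ) :
    ∑ v ∈ ballF G x, f v = f x + ∑ w ∈ G.neighborFinset x, f w := by
  rw [ballF, Finset.sum_insert (G.notMem_neighborFinset_self x)]

lemma sum_mu (hconn : G.Connected) (hreg : G.IsRegularOfDegree D) (x : V) :
    ∑ v, mu G D x v = 1 := by
  have := sum_mu_mul (D := D) hconn x (fun _ => (1:ℝ))
  simp only [mul_one] at this
  rw [this, Finset.sum_const, card_ballF hreg, nsmul_eq_mul]
  have h : ((D:ℝ) + 1) ≠ 0 := ne_of_gt Dp1_pos
  push_cast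
  field_simp

end Basics

section Plans

variable [Fintype V] {G : SimpleGraph V} {D L : ℕ} {a b c : V} {π π1 π2 : V → V → ℝ}

lemma plan_row_zero (hπ : IsPlan G D a b π) {u : V} (h : mu G D a u = 0) (v : V) :
    π u v = 0 := by
  have h2 := hπ.2.1 u
  rw [h] at h2
  exact (Finset.sum_eq_zero_iff_of_nonneg (fun v _ => hπ.1 u v)).mp h2 v (Finset.mem_univ v)

lemma plan_col_zero (hπ : IsPlan G D a b π) {v : V} (h : mu G D b v = 0) (u : V) :
    π u v = 0 := by
  have h2 := hπ.2.2 v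
  rw [h] at h2
  exact (Finset.sum_eq_zero_iff_of_nonneg (fun u _ => hπ.1 u v)).mp h2 u (Finset.mem_univ u)

lemma cst_nonneg (hpos : ∀ u v, 0 ≤ π u v) : 0 ≤ cst G π := by
  apply Finset.sum_nonneg; intro u _
  apply Finset.sum_nonneg; intro v _
  have := hpos u v
  positivity

lemma prod_plan (hconn : G.Connected) (hreg : G.IsRegularOfDegree D) (a b : V) :
    IsPlan G D a b (fun u v => mu G D a u * mu G D b v) := by
  refine ⟨fun u v => ?_, fun u => ?_, fun v => ?_⟩
  · have h1 := mu_nonneg (G := G) (D := D) a u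
    have h2 := mu_nonneg (G := G) (D := D) b v
    positivity
  · rw [← Finset.mul_sum, sum_mu hconn hreg, mul_one]
  · rw [← Finset.sum_mul, sum_mu hconn hreg, one_mul]

lemma W1_le_cst (hπ : IsPlan G D a b π) : W1 G D a b ≤ cst G π := by
  rw [W1_eq_sInf]
  apply csInf_le
  · refine ⟨0, fun x hx => ?_⟩
    obtain ⟨π', hπ', rfl⟩ := hx
    exact cst_nonneg hπ'.1
  · exact ⟨π, hπ, rfl⟩

lemma le_W1 (hconn : G.Connected) (hreg : G.IsRegularOfDegree D) {b₀ : ℝ}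
    (h : ∀ π, IsPlan G D a b π → b₀ ≤ cst G π) : b₀ ≤ W1 G D a b := by
  rw [W1_eq_sInf]
  have hne : { c : ℝ | ∃ π : V → V → ℝ, IsPlan G D a b π ∧ c = cst G π }.Nonempty :=
    ⟨_, ⟨_, prod_plan hconn hreg a b, rfl⟩⟩
  apply le_csInf hne
  rintro x ⟨π', hπ', rfl⟩
  exact h π' hπ'

lemma exists_plan_cst_lt (hconn : G.Connected) (hreg : G.IsRegularOfDegree D)
    {ε : ℝ} (hε : 0 < ε) (a b : V) :
    ∃ π, IsPlan G D a b π ∧ cst G π < W1 G D a b + ε := by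
  have hne : { c : ℝ | ∃ π : V → V → ℝ, IsPlan G D a b π ∧ c = cst G π }.Nonempty :=
    ⟨_, ⟨_, prod_plan hconn hreg a b, rfl⟩⟩
  obtain ⟨x, hx, hlt⟩ := Real.lt_sInf_add_pos hne hε
  obtain ⟨π', hπ', rfl⟩ := hx
  exact ⟨π', hπ', by rwa [W1_eq_sInf]⟩

lemma dual_le_cst (φ : V → ℝ) (hφ : ∀ u v, φ v - φ u ≤ (G.dist u v : ℝ))
    (hπ : IsPlan G D a b π) :
    (∑ v, mu G D b v * φ v) - (∑ u, mu G D a u * φ u) ≤ cst G π := by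
  have hb : ∑ v, mu G D b v * φ v = ∑ u, ∑ v, π u v * φ v := by
    rw [Finset.sum_comm]
    apply Finset.sum_congr rfl; intro v _
    rw [← hπ.2.2 v, Finset.sum_mul]
  have ha : ∑ u, mu G D a u * φ u = ∑ u, ∑ v, π u v * φ u := by
    apply Finset.sum_congr rfl; intro u _
    rw [← hπ.2.1 u, Finset.sum_mul]
  rw [hb, ha, ← Finset.sum_sub_distrib]
  unfold cst
  apply Finset.sum_le_sum; intro u _
  rw [← Finset.sum_sub_distrib]
  apply Finset.sum_le_sum; intro v _
  have : π u v * φ v - π u v * φ u = (φ v - φ u) * π u v := by ring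
  rw [this]
  exact mul_le_mul_of_nonneg_right (hφ u v) (hπ.1 u v)

lemma dual_le_W1 (hconn : G.Connected) (hreg : G.IsRegularOfDegree D)
    (φ : V → ℝ) (hφ : ∀ u v, φ v - φ u ≤ (G.dist u v : ℝ)) (a b : V) :
    (∑ v, mu G D b v * φ v) - (∑ u, mu G D a u * φ u) ≤ W1 G D a b :=
  le_W1 hconn hreg (fun π hπ => dual_le_cst φ hφ hπ)

lemma W1_edge_le (hBM : BMSharp G D L) (hD : 0 < D) (hL : 0 < L) {x y : V}
    (hadj : G.Adj x y) : W1 G D x y ≤ 1 - 2 * D / ((L:ℝ) * ((D:ℝ) + 1)) := by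
  have hDpos : (0:ℝ) < (D:ℝ) := by exact_mod_cast hD
  have hLpos : (0:ℝ) < (L:ℝ) := by exact_mod_cast hL
  have hbdd : BddBelow { k : ℝ | ∃ x y, G.Adj x y ∧ k = kappa G D x y } := by
    have hsub : { k : ℝ | ∃ x y, G.Adj x y ∧ k = kappa G D x y } ⊆
        Set.range (fun p : V × V => kappa G D p.1 p.2) := by
      rintro k ⟨x, y, _, rfl⟩; exact ⟨(x, y), rfl⟩
    exact ((Set.finite_range _).subset hsub).bddBelow
  have hmem : kappa G D x y ∈ { k : ℝ | ∃ x y, G.Adj x y ∧ k = kappa G D x y } :=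
    ⟨x, y, hadj, rfl⟩
  have h2 : 2 / (L:ℝ) ≤ kappa G D x y := by
    rw [← hBM]; exact csInf_le hbdd hmem
  unfold kappa at h2
  have h3 : 2 / (L:ℝ) * ((D:ℝ) / ((D:ℝ) + 1)) ≤ 1 - W1 G D x y := by
    have := mul_le_mul_of_nonneg_right h2
      (le_of_lt (div_pos hDpos (Dp1_pos (D := D))))
    calc 2 / (L:ℝ) * ((D:ℝ) / ((D:ℝ) + 1)) ≤
        ((D:ℝ) + 1) / (D:ℝ) * (1 - W1 G D x y) * ((D:ℝ) / ((D:ℝ) + 1)) := this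
      _ = 1 - W1 G D x y := by field_simp
  have h4 : 2 / (L:ℝ) * ((D:ℝ) / ((D:ℝ) + 1)) = 2 * D / ((L:ℝ) * ((D:ℝ) + 1)) := by
    field_simp
  rw [h4] at h3
  linarith

lemma mu_collapse (b : V) (q : V → ℝ) (hq : ∀ v, mu G D b v = 0 → q v = 0) :
    ((D:ℝ) + 1) * ∑ v, q v * mu G D b v = ∑ v, q v := by
  rw [Finset.mul_sum]
  apply Finset.sum_congr rfl; intro v _
  rcases mu_cases (G := G) (D := D) b v with h | h
  · rw [h, hq v h]; ring
  · rw [h]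
    have : ((D:ℝ) + 1) ≠ 0 := ne_of_gt Dp1_pos
    field_simp

/-- The glued plan. -/
noncomputable def gl (D : ℕ) (π1 π2 : V → V → ℝ) : V → V → ℝ :=
  fun u w => ((D:ℝ) + 1) * ∑ v, π1 u v * π2 v w

lemma glue_isPlan (hπ1 : IsPlan G D a b π1) (hπ2 : IsPlan G D b c π2) :
    IsPlan G D a c (gl D π1 π2) := by
  refine ⟨fun u w => ?_, fun u => ?_, fun w => ?_⟩
  · unfold gl
    have h : 0 ≤ ∑ v, π1 u v * π2 v w :=
      Finset.sum_nonneg (fun v _ => mul_nonneg (hπ1.1 u v) (hπ2.1 v w))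
    have := @Dp1_pos D
    positivity
  · unfold gl
    rw [← Finset.mul_sum, Finset.sum_comm]
    have : ∑ v, ∑ w, π1 u v * π2 v w = ∑ v, π1 u v * mu G D b v := by
      apply Finset.sum_congr rfl; intro v _
      rw [← Finset.mul_sum, hπ2.2.1 v]
    rw [this, mu_collapse b _ (fun v hv => plan_col_zero hπ1 hv u), hπ1.2.1 u]
  · unfold gl
    rw [← Finset.mul_sum, Finset.sum_comm]
    have : ∑ v, ∑ u, π1 u v * π2 v w = ∑ v, π2 v w * mu G D b v := by
      apply Finset.sum_congr rfl; intro v _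
      rw [← Finset.sum_mul, hπ1.2.2 v, mul_comm]
    rw [this, mu_collapse b _ (fun v hv => plan_row_zero hπ2 hv w), hπ2.2.2 w]

lemma glue_cst (hconn : G.Connected) (hπ1 : IsPlan G D a b π1) (hπ2 : IsPlan G D b c π2) :
    cst G (gl D π1 π2) ≤ cst G π1 + cst G π2 := by
  have key : cst G (gl D π1 π2) ≤
      ∑ u, ∑ w, ((D:ℝ) + 1) * ∑ v, ((G.dist u v : ℝ) + (G.dist v w : ℝ)) * (π1 u v * π2 v w) := by
    unfold cst gl
    apply Finset.sum_le_sum; intro u _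
    apply Finset.sum_le_sum; intro w _
    have lhs : (G.dist u w : ℝ) * (((D:ℝ) + 1) * ∑ v, π1 u v * π2 v w)
        = ∑ v, ((D:ℝ) + 1) * ((G.dist u w : ℝ) * (π1 u v * π2 v w)) := by
      rw [Finset.mul_sum, Finset.mul_sum]
      apply Finset.sum_congr rfl; intro v _; ring
    have rhs : ((D:ℝ) + 1) * ∑ v, ((G.dist u v : ℝ) + (G.dist v w : ℝ)) * (π1 u v * π2 v w)
        = ∑ v, ((D:ℝ) + 1) * (((G.dist u v : ℝ) + (G.dist v w : ℝ)) * (π1 u v * π2 v w)) := by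
      rw [Finset.mul_sum]
    rw [lhs, rhs]
    apply Finset.sum_le_sum; intro v _
    apply mul_le_mul_of_nonneg_left _ (le_of_lt (Dp1_pos (D := D)))
    apply mul_le_mul_of_nonneg_right _ (mul_nonneg (hπ1.1 u v) (hπ2.1 v w))
    have := hconn.dist_triangle (u := u) (v := v) (w := w)
    exact_mod_cast this
  have split : ∀ u w, ((D:ℝ) + 1) * ∑ v, ((G.dist u v : ℝ) + (G.dist v w : ℝ)) * (π1 u v * π2 v w)
      = ((D:ℝ) + 1) * ∑ v, (G.dist u v : ℝ) * (π1 u v * π2 v w)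
        + ((D:ℝ) + 1) * ∑ v, (G.dist v w : ℝ) * (π1 u v * π2 v w) := by
    intro u w
    rw [← mul_add, ← Finset.sum_add_distrib]
    congr 1
    apply Finset.sum_congr rfl; intro v _
    ring
  have e1 : ∑ u, ∑ w, ((D:ℝ) + 1) * ∑ v, (G.dist u v : ℝ) * (π1 u v * π2 v w) = cst G π1 := by
    unfold cst
    apply Finset.sum_congr rfl; intro u _
    have h1 : ∑ w, ((D:ℝ) + 1) * ∑ v, (G.dist u v : ℝ) * (π1 u v * π2 v w)
        = ((D:ℝ) + 1) * ∑ v, ((G.dist u v : ℝ) * π1 u v) * mu G D b v := by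
      rw [← Finset.mul_sum, Finset.sum_comm]
      congr 1
      apply Finset.sum_congr rfl; intro v _
      rw [← Finset.mul_sum, ← Finset.mul_sum, hπ2.2.1 v, mul_assoc]
    rw [h1, mu_collapse b _ (fun v hv => by rw [plan_col_zero hπ1 hv u, mul_zero])]
  have e2 : ∑ u, ∑ w, ((D:ℝ) + 1) * ∑ v, (G.dist v w : ℝ) * (π1 u v * π2 v w) = cst G π2 := by
    have h1 : ∀ w, ∑ u, ((D:ℝ) + 1) * ∑ v, (G.dist v w : ℝ) * (π1 u v * π2 v w)
        = ((D:ℝ) + 1) * ∑ v, ((G.dist v w : ℝ) * π2 v w) * mu G D b v := by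
      intro w
      rw [← Finset.mul_sum, Finset.sum_comm]
      congr 1
      apply Finset.sum_congr rfl; intro v _
      have h2 : ∀ u ∈ Finset.univ, (G.dist v w : ℝ) * (π1 u v * π2 v w)
          = π1 u v * ((G.dist v w : ℝ) * π2 v w) := fun u _ => by ring
      rw [Finset.sum_congr rfl h2, ← Finset.sum_mul, hπ1.2.2 v]
      ring
    calc ∑ u, ∑ w, ((D:ℝ) + 1) * ∑ v, (G.dist v w : ℝ) * (π1 u v * π2 v w)
        = ∑ w, ∑ u, ((D:ℝ) + 1) * ∑ v, (G.dist v w : ℝ) * (π1 u v * π2 v w) :=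
          Finset.sum_comm
      _ = ∑ w, ((D:ℝ) + 1) * ∑ v, ((G.dist v w : ℝ) * π2 v w) * mu G D b v :=
          Finset.sum_congr rfl (fun w _ => h1 w)
      _ = ∑ w, ∑ v, (G.dist v w : ℝ) * π2 v w :=
          Finset.sum_congr rfl (fun w _ =>
            mu_collapse b _ (fun v hv => by rw [plan_row_zero hπ2 hv w, mul_zero]))
      _ = cst G π2 := by unfold cst; exact Finset.sum_comm
  calc cst G (gl D π1 π2) ≤ _ := key
    _ = ∑ u, ∑ w, (((D:ℝ) + 1) * ∑ v, (G.dist u v : ℝ) * (π1 u v * π2 v w)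
        + ((D:ℝ) + 1) * ∑ v, (G.dist v w : ℝ) * (π1 u v * π2 v w)) := by
      apply Finset.sum_congr rfl; intro u _
      apply Finset.sum_congr rfl; intro w _
      exact split u w
    _ = cst G π1 + cst G π2 := by
      rw [← e1, ← e2, ← Finset.sum_add_distrib]
      apply Finset.sum_congr rfl; intro u _
      rw [← Finset.sum_add_distrib]

end Plans

section Chains

variable [Fintype V] {G : SimpleGraph V} {D L : ℕ}

lemma id_plan (x : V) :
    IsPlan G D x x (fun u v => if u = v then mu G D x u else 0) ∧
    cst G (fun u v => if u = v then mu G D x u else 0) = 0 := by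
  constructor
  · refine ⟨fun u v => ?_, fun u => ?_, fun v => ?_⟩
    · dsimp only; split
      · exact mu_nonneg x u
      · exact le_refl 0
    · dsimp only; rw [Finset.sum_ite_eq]; simp
    · dsimp only; rw [Finset.sum_ite_eq']; simp
  · unfold cst
    apply Finset.sum_eq_zero; intro u _
    apply Finset.sum_eq_zero; intro v _
    dsimp only
    rcases eq_or_ne u v with rfl | h
    · rw [SimpleGraph.dist_self]; simp
    · rw [if_neg h, mul_zero]

lemma chain_plan (hconn : G.Connected) (hreg : G.IsRegularOfDegree D)
    {w0 ε : ℝ} (hε : 0 < ε) :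
    ∀ (n : ℕ) (z : ℕ → V), (∀ k < n, W1 G D (z k) (z (k + 1)) ≤ w0) →
      ∃ π, IsPlan G D (z 0) (z n) π ∧ cst G π ≤ n * (w0 + ε) := by
  intro n
  induction n with
  | zero =>
    intro z _
    exact ⟨_, (id_plan (z 0)).1, by rw [(id_plan (z 0)).2]; simp⟩
  | succ n ih =>
    intro z hz
    obtain ⟨π1, hπ1, hc1⟩ := ih z (fun k hk => hz k (Nat.lt_succ_of_lt hk))
    obtain ⟨π2, hπ2, hc2⟩ := exists_plan_cst_lt hconn hreg hε (z n) (z (n + 1))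
    refine ⟨gl D π1 π2, glue_isPlan hπ1 hπ2, ?_⟩
    have h3 := glue_cst hconn hπ1 hπ2
    have h4 := hz n (Nat.lt_succ_self n)
    push_cast
    push_cast at hc1
    linarith

lemma exists_chain (hconn : G.Connected) {x y : V} {n : ℕ} (h : G.dist x y = n) :
    ∃ z : ℕ → V, z 0 = x ∧ z n = y ∧ ∀ k < n, G.Adj (z k) (z (k + 1)) := by
  obtain ⟨w, hw⟩ := hconn.exists_walk_length_eq_dist x y
  rw [h] at hw
  refine ⟨fun k => w.getVert k, w.getVert_zero, ?_, ?_⟩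
  · dsimp only
    rw [← hw]
    exact SimpleGraph.Walk.getVert_length w
  · intro k hk
    exact w.adj_getVert_succ (by omega)

/-- Average of `dist x0 ·` over the ball of `x`. -/
noncomputable def erho (G : SimpleGraph V) [Fintype V] (D : ℕ) (x0 x : V) : ℝ :=
  ∑ v, mu G D x v * (G.dist x0 v : ℝ)

lemma rho_lip (hconn : G.Connected) (x0 : V) (u v : V) :
    ((G.dist x0 v : ℝ)) - (G.dist x0 u : ℝ) ≤ (G.dist u v : ℝ) := by
  have := hconn.dist_triangle (u := x0) (v := u) (w := v)
  have h2 : (G.dist x0 v : ℝ) ≤ (G.dist x0 u : ℝ) + (G.dist u v : ℝ) := by exact_mod_cast this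
  linarith

lemma erho_self (hconn : G.Connected) (hreg : G.IsRegularOfDegree D) (x0 : V) :
    erho G D x0 x0 = (D : ℝ) / ((D : ℝ) + 1) := by
  unfold erho
  rw [sum_mu_mul hconn, sum_ballF, SimpleGraph.dist_self]
  have h1 : ∑ w ∈ G.neighborFinset x0, ((G.dist x0 w : ℝ)) = D := by
    rw [Finset.sum_congr rfl (fun w hw => ?_), Finset.sum_const, nsmul_eq_mul]
    · rw [G.card_neighborFinset_eq_degree, hreg x0, mul_one]
    · rw [SimpleGraph.dist_eq_one_iff_adj.mpr ((G.mem_neighborFinset x0 w).mp hw)]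
      norm_num
  rw [h1]
  push_cast
  field_simp
  ring

lemma erho_pole_ge (hconn : G.Connected) (hreg : G.IsRegularOfDegree D) {x0 p : V}
    (hp : G.dist x0 p = L) :
    (L : ℝ) - (D : ℝ) / ((D : ℝ) + 1) ≤ erho G D x0 p := by
  unfold erho
  rw [sum_mu_mul hconn, sum_ballF, hp]
  have h1 : ((D : ℝ)) * ((L : ℝ) - 1) ≤ ∑ w ∈ G.neighborFinset p, ((G.dist x0 w : ℝ)) := by
    have := Finset.card_nsmul_le_sum (G.neighborFinset p)
      (fun w => (G.dist x0 w : ℝ)) ((L : ℝ) - 1) ?_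
    · rw [G.card_neighborFinset_eq_degree, hreg p, nsmul_eq_mul] at this
      exact this
    · intro w hw
      have hadj : G.Adj p w := (G.mem_neighborFinset p w).mp hw
      have h3 : G.dist x0 p ≤ G.dist x0 w + G.dist w p := hconn.dist_triangle
      have h4 : G.dist w p = 1 := SimpleGraph.dist_eq_one_iff_adj.mpr hadj.symm
      rw [hp, h4] at h3
      have h5 : (L : ℝ) ≤ (G.dist x0 w : ℝ) + 1 := by exact_mod_cast h3
      linarith
  have hD1 : (0:ℝ) < (D:ℝ) + 1 := Dp1_pos
  have h2 : (L:ℝ) - (D:ℝ)/((D:ℝ)+1) = (1/((D:ℝ)+1)) * ((L:ℝ) + (D:ℝ)*((L:ℝ)-1)) := by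
    field_simp
    ring
  rw [h2]
  have h3 : (0:ℝ) ≤ 1/((D:ℝ)+1) := by positivity
  apply mul_le_mul_of_nonneg_left _ h3
  linarith

lemma chain_exact (hconn : G.Connected) (hreg : G.IsRegularOfDegree D)
    (hBM : BMSharp G D L) (hD : 0 < D) (hL : 0 < L) {x0 p : V} (hp : G.dist x0 p = L)
    (z : ℕ → V) (hz0 : z 0 = x0) (hzL : z L = p)
    (hadj : ∀ k < L, G.Adj (z k) (z (k + 1))) :
    ∀ k < L, W1 G D (z k) (z (k + 1)) = 1 - 2 * D / ((L : ℝ) * ((D : ℝ) + 1)) ∧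
      erho G D x0 (z (k + 1)) - erho G D x0 (z k)
        = 1 - 2 * D / ((L : ℝ) * ((D : ℝ) + 1)) := by
  have hLpos : (0:ℝ) < (L:ℝ) := by exact_mod_cast hL
  set c : ℝ := 2 * D / ((L : ℝ) * ((D : ℝ) + 1)) with hc
  have ha : ∀ k < L, erho G D x0 (z (k + 1)) - erho G D x0 (z k)
      ≤ W1 G D (z k) (z (k + 1)) := by
    intro k _
    exact dual_le_W1 hconn hreg (fun v => (G.dist x0 v : ℝ)) (rho_lip hconn x0) _ _
  have hW : ∀ k < L, W1 G D (z k) (z (k + 1)) ≤ 1 - c :=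
    fun k hk => W1_edge_le hBM hD hL (hadj k hk)
  have hsum : ∑ k ∈ Finset.range L, (erho G D x0 (z (k + 1)) - erho G D x0 (z k))
      = erho G D x0 p - erho G D x0 x0 := by
    rw [Finset.sum_range_sub (fun k => erho G D x0 (z k)), hzL, hz0]
  have hLc : (L:ℝ) * c = 2 * D / ((D:ℝ) + 1) := by
    rw [hc]
    field_simp
  have hsumge : (L : ℝ) * (1 - c) ≤ ∑ k ∈ Finset.range L,
      (erho G D x0 (z (k + 1)) - erho G D x0 (z k)) := by
    rw [hsum, erho_self hconn hreg]
    have := erho_pole_ge hconn hreg hp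
    have h2 : (L:ℝ) * (1 - c) = (L:ℝ) - (L:ℝ) * c := by ring
    rw [h2, hLc]
    have hDD : (2:ℝ) * D / ((D:ℝ)+1) = (D:ℝ)/((D:ℝ)+1) + (D:ℝ)/((D:ℝ)+1) := by ring
    linarith
  intro k hk
  have hake : erho G D x0 (z (k + 1)) - erho G D x0 (z k) ≥ 1 - c := by
    have herase : ∑ j ∈ (Finset.range L).erase k,
        (erho G D x0 (z (j + 1)) - erho G D x0 (z j)) ≤ ((L - 1 : ℕ) : ℝ) * (1 - c) := by
      have := Finset.sum_le_card_nsmul ((Finset.range L).erase k)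
        (fun j => erho G D x0 (z (j + 1)) - erho G D x0 (z j)) (1 - c) ?_
      · rwa [Finset.card_erase_of_mem (Finset.mem_range.mpr hk), Finset.card_range,
          nsmul_eq_mul] at this
      · intro j hj
        have hjL : j < L := Finset.mem_range.mp (Finset.mem_of_mem_erase hj)
        exact le_trans (ha j hjL) (hW j hjL)
    have hadd : (erho G D x0 (z (k + 1)) - erho G D x0 (z k)) +
        ∑ j ∈ (Finset.range L).erase k,
          (erho G D x0 (z (j + 1)) - erho G D x0 (z j))
        = ∑ k ∈ Finset.range L, (erho G D x0 (z (k + 1)) - erho G D x0 (z k)) :=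
      Finset.add_sum_erase (Finset.range L)
        (fun j => erho G D x0 (z (j + 1)) - erho G D x0 (z j)) (Finset.mem_range.mpr hk)
    have hcast : ((L - 1 : ℕ) : ℝ) = (L : ℝ) - 1 := by
      have : 1 ≤ L := hL
      push_cast [this]
      ring
    rw [hcast] at herase
    nlinarith [hsumge, herase, hadd]
  have h1 := ha k hk
  have h2 := hW k hk
  constructor
  · linarith
  · linarith

end Chains

section Pole

variable [Fintype V] {G : SimpleGraph V} {D L : ℕ}

/-- marginal evaluation of the "radial" lower bound functional -/
lemma plan_F_sum (hconn : G.Connected) (hreg : G.IsRegularOfDegree D) {x0 p : V} {π : V → V → ℝ}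
    (hπ : IsPlan G D x0 p π) :
    ∑ u, ∑ w, ((L : ℝ) - (G.dist x0 u : ℝ) - (G.dist p w : ℝ)) * π u w
      = (L : ℝ) - 2 * D / ((D : ℝ) + 1) := by
  have e1 : ∑ u, ∑ w, (L : ℝ) * π u w = (L : ℝ) := by
    have : ∀ u, ∑ w, (L : ℝ) * π u w = (L : ℝ) * mu G D x0 u := by
      intro u; rw [← Finset.mul_sum, hπ.2.1 u]
    rw [Finset.sum_congr rfl (fun u _ => this u), ← Finset.mul_sum, sum_mu hconn hreg, mul_one]
  have e2 : ∑ u, ∑ w, (G.dist x0 u : ℝ) * π u w = (D : ℝ) / ((D : ℝ) + 1) := by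
    have : ∀ u, ∑ w, (G.dist x0 u : ℝ) * π u w = mu G D x0 u * (G.dist x0 u : ℝ) := by
      intro u; rw [← Finset.mul_sum, hπ.2.1 u, mul_comm]
    rw [Finset.sum_congr rfl (fun u _ => this u)]
    exact erho_self hconn hreg x0
  have e3 : ∑ u, ∑ w, (G.dist p w : ℝ) * π u w = (D : ℝ) / ((D : ℝ) + 1) := by
    rw [Finset.sum_comm]
    have : ∀ w, ∑ u, (G.dist p w : ℝ) * π u w = mu G D p w * (G.dist p w : ℝ) := by
      intro w; rw [← Finset.mul_sum, hπ.2.2 w, mul_comm]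
    rw [Finset.sum_congr rfl (fun w _ => this w)]
    exact erho_self hconn hreg p
  have expand : ∑ u, ∑ w, ((L : ℝ) - (G.dist x0 u : ℝ) - (G.dist p w : ℝ)) * π u w
      = (∑ u, ∑ w, (L : ℝ) * π u w) - (∑ u, ∑ w, (G.dist x0 u : ℝ) * π u w)
        - (∑ u, ∑ w, (G.dist p w : ℝ) * π u w) := by
    rw [← Finset.sum_sub_distrib, ← Finset.sum_sub_distrib]
    apply Finset.sum_congr rfl; intro u _
    rw [← Finset.sum_sub_distrib, ← Finset.sum_sub_distrib]
    apply Finset.sum_congr rfl; intro w _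
    ring
  rw [expand, e1, e2, e3]
  ring

lemma F_le_dist (hconn : G.Connected) {x0 p : V} (hp : G.dist x0 p = L) (u w : V) :
    ((L : ℝ) - (G.dist x0 u : ℝ) - (G.dist p w : ℝ)) ≤ (G.dist u w : ℝ) := by
  have t1 : G.dist x0 p ≤ G.dist x0 u + G.dist u p := hconn.dist_triangle
  have t2 : G.dist u p ≤ G.dist u w + G.dist w p := hconn.dist_triangle
  have t3 : G.dist w p = G.dist p w := SimpleGraph.dist_comm
  rw [hp] at t1
  have : (L : ℕ) ≤ G.dist x0 u + G.dist u w + G.dist p w := by omega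
  have h4 : (L : ℝ) ≤ (G.dist x0 u : ℝ) + (G.dist u w : ℝ) + (G.dist p w : ℝ) := by
    exact_mod_cast this
  linarith

/-- Every neighbour of a pole lies on a geodesic to the antipode. -/
lemma dist_pole_S1 (hconn : G.Connected) (hreg : G.IsRegularOfDegree D)
    (hBM : BMSharp G D L) (hD : 0 < D) (hL : 0 < L) {x0 p : V} (hp : G.dist x0 p = L)
    {x1 : V} (hx1 : G.dist x0 x1 = 1) : G.dist x1 p + 1 = L := by
  have hLpos : (0:ℝ) < (L:ℝ) := by exact_mod_cast hL
  have hD1 : (0:ℝ) < (D:ℝ) + 1 := Dp1_pos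
  set c : ℝ := 2 * D / ((L : ℝ) * ((D : ℝ) + 1)) with hc
  have hLc : (L:ℝ) * c = 2 * D / ((D:ℝ) + 1) := by
    rw [hc]; field_simp
  set ε : ℝ := 1 / (2 * (L:ℝ) * ((D:ℝ) + 1)) with hε
  have hεpos : 0 < ε := by rw [hε]; positivity
  obtain ⟨z, hz0, hzL, hadj⟩ := exists_chain hconn hp
  obtain ⟨π, hπ, hcst⟩ := chain_plan hconn hreg hεpos L z
    (fun k hk => W1_edge_le hBM hD hL (hadj k hk))
  rw [hz0, hzL] at hπ
  have hub : cst G π ≤ (L:ℝ) * (1 - c) + (L:ℝ) * ε := by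
    calc cst G π ≤ (L:ℝ) * ((1 - c) + ε) := hcst
      _ = (L:ℝ) * (1 - c) + (L:ℝ) * ε := by ring
  have hdef : ∑ u, ∑ w, ((G.dist u w : ℝ)
      - ((L : ℝ) - (G.dist x0 u : ℝ) - (G.dist p w : ℝ))) * π u w ≤ (L:ℝ) * ε := by
    have hFsum := plan_F_sum (L := L) hconn hreg hπ
    have hexp : ∑ u, ∑ w, ((G.dist u w : ℝ)
        - ((L : ℝ) - (G.dist x0 u : ℝ) - (G.dist p w : ℝ))) * π u w
        = cst G π - ∑ u, ∑ w, ((L : ℝ) - (G.dist x0 u : ℝ) - (G.dist p w : ℝ)) * π u w := by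
      unfold cst
      rw [← Finset.sum_sub_distrib]
      apply Finset.sum_congr rfl; intro u _
      rw [← Finset.sum_sub_distrib]
      apply Finset.sum_congr rfl; intro w _
      ring
    rw [hexp, hFsum]
    have : (L:ℝ) * (1 - c) = (L:ℝ) - 2 * D / ((D:ℝ) + 1) := by
      rw [mul_sub, hLc, mul_one]
    linarith
  -- suppose x1 is not on a geodesic
  by_contra hcon
  have hge : L ≤ G.dist x1 p + 1 := by
    have t1 : G.dist x0 p ≤ G.dist x0 x1 + G.dist x1 p := hconn.dist_triangle
    omega
  have hbig : L ≤ G.dist x1 p := by omega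
  -- each term in row x1 is at least π x1 w
  have hrow : ∀ w, π x1 w ≤ ((G.dist x1 w : ℝ)
      - ((L : ℝ) - (G.dist x0 x1 : ℝ) - (G.dist p w : ℝ))) * π x1 w := by
    intro w
    have t2 : G.dist x1 p ≤ G.dist x1 w + G.dist w p := hconn.dist_triangle
    have t3 : G.dist w p = G.dist p w := SimpleGraph.dist_comm
    have h5 : L ≤ G.dist x1 w + G.dist p w := by omega
    have h6 : (L : ℝ) ≤ (G.dist x1 w : ℝ) + (G.dist p w : ℝ) := by exact_mod_cast h5
    have h7 : (1:ℝ) ≤ (G.dist x1 w : ℝ) - ((L : ℝ) - (G.dist x0 x1 : ℝ) - (G.dist p w : ℝ)) := by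
      rw [hx1]; push_cast; linarith
    nlinarith [hπ.1 x1 w]
  have hrowsum : (1:ℝ) / ((D:ℝ) + 1) ≤ ∑ w, ((G.dist x1 w : ℝ)
      - ((L : ℝ) - (G.dist x0 x1 : ℝ) - (G.dist p w : ℝ))) * π x1 w := by
    have h8 : ∑ w, π x1 w = mu G D x0 x1 := hπ.2.1 x1
    have h9 : mu G D x0 x1 = 1 / ((D:ℝ) + 1) := mu_eq_of_le x0 x1 (by rw [hx1])
    calc (1:ℝ) / ((D:ℝ) + 1) = ∑ w, π x1 w := by rw [h8, h9]
      _ ≤ _ := Finset.sum_le_sum (fun w _ => hrow w)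
  have hsingle : ∑ w, ((G.dist x1 w : ℝ)
      - ((L : ℝ) - (G.dist x0 x1 : ℝ) - (G.dist p w : ℝ))) * π x1 w
      ≤ ∑ u, ∑ w, ((G.dist u w : ℝ)
      - ((L : ℝ) - (G.dist x0 u : ℝ) - (G.dist p w : ℝ))) * π u w := by
    apply Finset.single_le_sum (f := fun u => ∑ w, ((G.dist u w : ℝ)
      - ((L : ℝ) - (G.dist x0 u : ℝ) - (G.dist p w : ℝ))) * π u w) _ (Finset.mem_univ x1)
    intro u _
    apply Finset.sum_nonneg; intro w _
    apply mul_nonneg _ (hπ.1 u w)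
    have := F_le_dist hconn hp u w
    linarith
  have hLε : (L:ℝ) * ε < 1 / ((D:ℝ) + 1) := by
    rw [hε]
    have h10 : (L:ℝ) * (1 / (2 * (L:ℝ) * ((D:ℝ) + 1))) = 1 / (2 * ((D:ℝ) + 1)) := by
      field_simp
    rw [h10]
    rw [div_lt_div_iff₀ (by positivity) hD1]
    linarith
  linarith

end Pole

section Pole2

variable [Fintype V] {G : SimpleGraph V} {D L : ℕ}

lemma dist_pole_S2 (hconn : G.Connected) (hreg : G.IsRegularOfDegree D)
    (hBM : BMSharp G D L) (hD : 0 < D) (hL : 0 < L) (hL2 : 2 ≤ L)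
    {x0 p : V} (hp : G.dist x0 p = L)
    {x1 y : V} (hx1 : G.dist x0 x1 = 1) (hy2 : G.dist x0 y = 2) (hxy : G.dist x1 y ≤ 1) :
    G.dist y p + 2 = L := by
  have hLpos : (0:ℝ) < (L:ℝ) := by exact_mod_cast hL
  have hD1 : (0:ℝ) < (D:ℝ) + 1 := Dp1_pos
  set c : ℝ := 2 * D / ((L : ℝ) * ((D : ℝ) + 1)) with hc
  have hLc : (L:ℝ) * c = 2 * D / ((D:ℝ) + 1) := by
    rw [hc]; field_simp
  set ε : ℝ := 1 / (2 * (L:ℝ) * ((D:ℝ) + 1)) with hε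
  have hεpos : 0 < ε := by rw [hε]; positivity
  -- geodesic from x1 to p, of length L - 1
  have hx1p : G.dist x1 p + 1 = L := dist_pole_S1 hconn hreg hBM hD hL hp hx1
  obtain ⟨z, hz0, hzL, hadj⟩ := exists_chain hconn (rfl : G.dist x1 p = G.dist x1 p)
  -- plan from x1 to p along the geodesic
  obtain ⟨Ψ, hΨ, hcΨ⟩ := chain_plan hconn hreg hεpos (G.dist x1 p) z
    (fun k hk => W1_edge_le hBM hD hL (hadj k hk))
  rw [hz0, hzL] at hΨ
  -- ε-optimal plan from x0 to x1
  obtain ⟨π0, hπ0, hcπ0⟩ := exists_plan_cst_lt hconn hreg hεpos x0 x1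
  have hWx1 : W1 G D x0 x1 ≤ 1 - c := W1_edge_le hBM hD hL
    (SimpleGraph.dist_eq_one_iff_adj.mp hx1)
  have hcπ0' : cst G π0 ≤ (1 - c) + ε := by linarith
  have hcΨ' : cst G Ψ ≤ ((L:ℝ) - 1) * ((1 - c) + ε) := by
    have h1 : ((G.dist x1 p : ℕ) : ℝ) = (L:ℝ) - 1 := by
      have : (G.dist x1 p) + 1 = L := hx1p
      push_cast [← this]
      ring
    rw [← h1]
    have h2 : (0:ℝ) ≤ (1 - c) + ε := by
      have hL2' : (2:ℝ) ≤ (L:ℝ) := by exact_mod_cast hL2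
      have : c ≤ 1 := by
        rw [hc, div_le_one (by positivity)]
        nlinarith [hD1, (by exact_mod_cast hD.le : (0:ℝ) ≤ (D:ℝ))]
      linarith
    exact hcΨ
  -- the triple measure
  set T : V → V → V → ℝ := fun u v w => ((D:ℝ) + 1) * (π0 u v * Ψ v w) with hT
  have hTnn : ∀ u v w, 0 ≤ T u v w := by
    intro u v w
    rw [hT]
    have := hπ0.1 u v
    have := hΨ.1 v w
    positivity
  -- the glued plan
  have hσ : IsPlan G D x0 p (gl D π0 Ψ) := glue_isPlan hπ0 hΨ
  -- evaluation of the three components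
  have eA : ∑ v, ∑ u, ∑ w, T u v w * (G.dist u v : ℝ) = cst G π0 := by
    have step1 : ∀ v, ∑ u, ∑ w, T u v w * (G.dist u v : ℝ)
        = ((D:ℝ) + 1) * ((∑ u, (G.dist u v : ℝ) * π0 u v) * mu G D x1 v) := by
      intro v
      have perU : ∀ u, ∑ w, T u v w * (G.dist u v : ℝ)
          = ((D:ℝ) + 1) * (((G.dist u v : ℝ) * π0 u v) * mu G D x1 v) := by
        intro u
        have e : ∀ w ∈ Finset.univ, T u v w * (G.dist u v : ℝ)
            = (((D:ℝ) + 1) * ((G.dist u v : ℝ) * π0 u v)) * Ψ v w := by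
          intro w _; rw [hT]; ring
        rw [Finset.sum_congr rfl e, ← Finset.mul_sum, hΨ.2.1 v]
        ring
      rw [Finset.sum_congr rfl (fun u _ => perU u), ← Finset.mul_sum, ← Finset.sum_mul]
    rw [Finset.sum_congr rfl (fun v _ => step1 v), ← Finset.mul_sum]
    rw [mu_collapse x1 _ (fun v hv => Finset.sum_eq_zero
      (fun u _ => by rw [plan_col_zero hπ0 hv u, mul_zero]))]
    unfold cst
    rw [Finset.sum_comm]
  have eB : ∑ v, ∑ u, ∑ w, T u v w * (G.dist v w : ℝ) = cst G Ψ := by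
    have step1 : ∀ v, ∑ u, ∑ w, T u v w * (G.dist v w : ℝ)
        = ((D:ℝ) + 1) * ((∑ w, (G.dist v w : ℝ) * Ψ v w) * mu G D x1 v) := by
      intro v
      have perU : ∀ u, ∑ w, T u v w * (G.dist v w : ℝ)
          = (((D:ℝ) + 1) * π0 u v) * (∑ w, (G.dist v w : ℝ) * Ψ v w) := by
        intro u
        rw [Finset.mul_sum]
        apply Finset.sum_congr rfl; intro w _
        rw [hT]; ring
      rw [Finset.sum_congr rfl (fun u _ => perU u), ← Finset.sum_mul, ← Finset.mul_sum,
        hπ0.2.2 v]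
      ring
    rw [Finset.sum_congr rfl (fun v _ => step1 v), ← Finset.mul_sum]
    rw [mu_collapse x1 _ (fun v hv => Finset.sum_eq_zero
      (fun w _ => by rw [plan_row_zero hΨ hv w, mul_zero]))]
    rfl
  have eC : ∑ v, ∑ u, ∑ w, T u v w * ((L : ℝ) - (G.dist x0 u : ℝ) - (G.dist p w : ℝ))
      = (L : ℝ) - 2 * D / ((D : ℝ) + 1) := by
    rw [Finset.sum_comm]
    have step1 : ∀ u, ∑ v, ∑ w, T u v w * ((L : ℝ) - (G.dist x0 u : ℝ) - (G.dist p w : ℝ))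
        = ∑ w, ((L : ℝ) - (G.dist x0 u : ℝ) - (G.dist p w : ℝ)) * gl D π0 Ψ u w := by
      intro u
      rw [Finset.sum_comm]
      apply Finset.sum_congr rfl; intro w _
      rw [← Finset.sum_mul]
      have hgl : ∑ v, T u v w = gl D π0 Ψ u w := by
        simp only [hT]
        unfold gl
        rw [Finset.mul_sum]
      rw [hgl, mul_comm]
    rw [Finset.sum_congr rfl (fun u _ => step1 u)]
    exact plan_F_sum hconn hreg hσ
  -- defect bound
  have hdef : ∑ v, ∑ u, ∑ w, T u v w *
      (((G.dist u v : ℝ) + (G.dist v w : ℝ)) - ((L : ℝ) - (G.dist x0 u : ℝ) - (G.dist p w : ℝ)))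
      ≤ (L:ℝ) * ε := by
    have hsplit : ∑ v, ∑ u, ∑ w, T u v w *
        (((G.dist u v : ℝ) + (G.dist v w : ℝ)) - ((L : ℝ) - (G.dist x0 u : ℝ) - (G.dist p w : ℝ)))
        = (∑ v, ∑ u, ∑ w, T u v w * (G.dist u v : ℝ))
          + (∑ v, ∑ u, ∑ w, T u v w * (G.dist v w : ℝ))
          - (∑ v, ∑ u, ∑ w, T u v w * ((L : ℝ) - (G.dist x0 u : ℝ) - (G.dist p w : ℝ))) := by
      rw [← Finset.sum_add_distrib, ← Finset.sum_sub_distrib]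
      apply Finset.sum_congr rfl; intro v _
      rw [← Finset.sum_add_distrib, ← Finset.sum_sub_distrib]
      apply Finset.sum_congr rfl; intro u _
      rw [← Finset.sum_add_distrib, ← Finset.sum_sub_distrib]
      apply Finset.sum_congr rfl; intro w _
      ring
    rw [hsplit, eA, eB, eC]
    have key : cst G π0 + cst G Ψ ≤ (L:ℝ) * (1 - c) + (L:ℝ) * ε := by
      have : (1 - c) + ε + ((L:ℝ) - 1) * ((1 - c) + ε) = (L:ℝ) * (1 - c) + (L:ℝ) * ε := by
        ring
      linarith
    have hLc2 : (L:ℝ) * (1 - c) = (L:ℝ) - 2 * D / ((D:ℝ) + 1) := by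
      rw [mul_sub, hLc, mul_one]
    linarith
  -- pointwise nonnegativity of the gap
  have hgapnn : ∀ u v w, (0:ℝ) ≤
      ((G.dist u v : ℝ) + (G.dist v w : ℝ)) - ((L : ℝ) - (G.dist x0 u : ℝ) - (G.dist p w : ℝ)) := by
    intro u v w
    have t1 : G.dist x0 p ≤ G.dist x0 u + G.dist u p := hconn.dist_triangle
    have t2 : G.dist u p ≤ G.dist u v + G.dist v p := hconn.dist_triangle
    have t3 : G.dist v p ≤ G.dist v w + G.dist w p := hconn.dist_triangle
    have t4 : G.dist w p = G.dist p w := SimpleGraph.dist_comm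
    have h5 : L ≤ G.dist x0 u + G.dist u v + G.dist v w + G.dist p w := by omega
    have h6 : (L:ℝ) ≤ (G.dist x0 u : ℝ) + (G.dist u v : ℝ) + (G.dist v w : ℝ)
        + (G.dist p w : ℝ) := by exact_mod_cast h5
    linarith
  -- now suppose y is not on a geodesic
  by_contra hcon
  have hge : L ≤ G.dist x0 y + G.dist y p := hp ▸ hconn.dist_triangle
  rw [hy2] at hge
  have hbad : L - 1 ≤ G.dist y p := by omega
  -- each term in the slice v = y is at least T u y w
  have hslice : ∀ u w, T u y w ≤ T u y w *
      (((G.dist u y : ℝ) + (G.dist y w : ℝ)) - ((L : ℝ) - (G.dist x0 u : ℝ) - (G.dist p w : ℝ))) := by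
    intro u w
    have t1 : G.dist x0 y ≤ G.dist x0 u + G.dist u y := hconn.dist_triangle
    have t2 : G.dist y p ≤ G.dist y w + G.dist w p := hconn.dist_triangle
    have t3 : G.dist w p = G.dist p w := SimpleGraph.dist_comm
    have h5 : L + 1 ≤ G.dist x0 u + G.dist u y + G.dist y w + G.dist p w := by omega
    have h6 : (L:ℝ) + 1 ≤ (G.dist x0 u : ℝ) + (G.dist u y : ℝ) + (G.dist y w : ℝ)
        + (G.dist p w : ℝ) := by exact_mod_cast h5
    have h7 : (1:ℝ) ≤ ((G.dist u y : ℝ) + (G.dist y w : ℝ))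
        - ((L : ℝ) - (G.dist x0 u : ℝ) - (G.dist p w : ℝ)) := by linarith
    nlinarith [hTnn u y w]
  have hmass : ∑ u, ∑ w, T u y w = 1 / ((D:ℝ) + 1) := by
    have h8 : ∀ u, ∑ w, T u y w = (((D:ℝ) + 1) * π0 u y) * mu G D x1 y := by
      intro u
      have e : ∀ w ∈ Finset.univ, T u y w = (((D:ℝ) + 1) * π0 u y) * Ψ y w := by
        intro w _; rw [hT]; ring
      rw [Finset.sum_congr rfl e, ← Finset.mul_sum, hΨ.2.1 y]
    rw [Finset.sum_congr rfl (fun u _ => h8 u)]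
    have e2 : ∀ u ∈ Finset.univ, (((D:ℝ) + 1) * π0 u y) * mu G D x1 y
        = (((D:ℝ) + 1) * mu G D x1 y) * π0 u y := by intro u _; ring
    rw [Finset.sum_congr rfl e2, ← Finset.mul_sum, hπ0.2.2 y]
    rw [mu_eq_of_le x1 y hxy]
    field_simp
  have hsliceLB : 1 / ((D:ℝ) + 1) ≤ ∑ u, ∑ w, T u y w *
      (((G.dist u y : ℝ) + (G.dist y w : ℝ)) - ((L : ℝ) - (G.dist x0 u : ℝ) - (G.dist p w : ℝ))) := by
    rw [← hmass]
    apply Finset.sum_le_sum; intro u _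
    apply Finset.sum_le_sum; intro w _
    exact hslice u w
  have hsingle : ∑ u, ∑ w, T u y w *
      (((G.dist u y : ℝ) + (G.dist y w : ℝ)) - ((L : ℝ) - (G.dist x0 u : ℝ) - (G.dist p w : ℝ)))
      ≤ ∑ v, ∑ u, ∑ w, T u v w *
      (((G.dist u v : ℝ) + (G.dist v w : ℝ)) - ((L : ℝ) - (G.dist x0 u : ℝ) - (G.dist p w : ℝ))) := by
    apply Finset.single_le_sum (f := fun v => ∑ u, ∑ w, T u v w *
      (((G.dist u v : ℝ) + (G.dist v w : ℝ))
        - ((L : ℝ) - (G.dist x0 u : ℝ) - (G.dist p w : ℝ)))) _ (Finset.mem_univ y)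
    intro v _
    apply Finset.sum_nonneg; intro u _
    apply Finset.sum_nonneg; intro w _
    exact mul_nonneg (hTnn u v w) (hgapnn u v w)
  have hLε : (L:ℝ) * ε < 1 / ((D:ℝ) + 1) := by
    rw [hε]
    have h10 : (L:ℝ) * (1 / (2 * (L:ℝ) * ((D:ℝ) + 1))) = 1 / (2 * ((D:ℝ) + 1)) := by
      field_simp
    rw [h10]
    rw [div_lt_div_iff₀ (by positivity) hD1]
    linarith
  linarith

end Pole2

section EdgeExact

variable [Fintype V] {G : SimpleGraph V} {D L : ℕ}

lemma edge_exact_S1 (hconn : G.Connected) (hreg : G.IsRegularOfDegree D)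
    (hBM : BMSharp G D L) (hD : 0 < D) (hL : 0 < L) {x0 p x1 : V}
    (hp : G.dist x0 p = L) (hx1 : G.dist x0 x1 = 1) :
    W1 G D x0 x1 = 1 - 2 * D / ((L : ℝ) * ((D : ℝ) + 1)) ∧
      erho G D x0 x1 - erho G D x0 x0 = 1 - 2 * D / ((L : ℝ) * ((D : ℝ) + 1)) := by
  have hx1p : G.dist x1 p + 1 = L := dist_pole_S1 hconn hreg hBM hD hL hp hx1
  obtain ⟨z', hz'0, hz'L, hadj'⟩ := exists_chain hconn (rfl : G.dist x1 p = G.dist x1 p)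
  set z : ℕ → V := fun k => if k = 0 then x0 else z' (k - 1) with hz
  have hz0 : z 0 = x0 := by simp [hz]
  have hz1 : z 1 = x1 := by simp [hz, hz'0]
  have hzL : z L = p := by
    have hL1 : L - 1 = G.dist x1 p := by omega
    have : z L = z' (L - 1) := by
      simp only [hz]
      rw [if_neg (by omega)]
    rw [this, hL1, hz'L]
  have hadj : ∀ k < L, G.Adj (z k) (z (k + 1)) := by
    intro k hk
    rcases Nat.eq_zero_or_pos k with rfl | hkpos
    · rw [hz0, hz1]
      exact SimpleGraph.dist_eq_one_iff_adj.mp hx1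
    · have h1 : z k = z' (k - 1) := by simp only [hz]; rw [if_neg (by omega)]
      have h2 : z (k + 1) = z' k := by
        simp only [hz]; rw [if_neg (by omega)]
        simp only [Nat.add_sub_cancel]
      rw [h1, h2]
      have := hadj' (k - 1) (by omega)
      have h3 : k - 1 + 1 = k := by omega
      rwa [h3] at this
  have := chain_exact hconn hreg hBM hD hL hp z hz0 hzL hadj 0 hL
  rw [hz0, show (0:ℕ) + 1 = 1 from rfl, hz1] at this
  exact this

lemma edge_exact_S2 (hconn : G.Connected) (hreg : G.IsRegularOfDegree D)
    (hBM : BMSharp G D L) (hD : 0 < D) (hL : 0 < L) (hL2 : 2 ≤ L) {x0 p x1 y : V}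
    (hp : G.dist x0 p = L) (hx1 : G.dist x0 x1 = 1) (hy2 : G.dist x0 y = 2)
    (hxy : G.Adj x1 y) :
    W1 G D x1 y = 1 - 2 * D / ((L : ℝ) * ((D : ℝ) + 1)) ∧
      erho G D x0 y - erho G D x0 x1 = 1 - 2 * D / ((L : ℝ) * ((D : ℝ) + 1)) := by
  have hyp : G.dist y p + 2 = L := dist_pole_S2 hconn hreg hBM hD hL hL2 hp hx1 hy2
    (le_of_eq (SimpleGraph.dist_eq_one_iff_adj.mpr hxy))
  obtain ⟨z', hz'0, hz'L, hadj'⟩ := exists_chain hconn (rfl : G.dist y p = G.dist y p)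
  set z : ℕ → V := fun k => if k = 0 then x0 else if k = 1 then x1 else z' (k - 2) with hz
  have hz0 : z 0 = x0 := by simp [hz]
  have hz1 : z 1 = x1 := by simp [hz]
  have hz2 : z 2 = y := by
    simp only [hz]
    norm_num [hz'0]
  have hzL : z L = p := by
    have hL1 : L - 2 = G.dist y p := by omega
    have : z L = z' (L - 2) := by
      simp only [hz]
      rw [if_neg (by omega), if_neg (by omega)]
    rw [this, hL1, hz'L]
  have hadj : ∀ k < L, G.Adj (z k) (z (k + 1)) := by
    intro k hk
    rcases Nat.lt_or_ge k 2 with hk2 | hk2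
    · interval_cases k
      · rw [hz0, hz1]
        exact SimpleGraph.dist_eq_one_iff_adj.mp hx1
      · rw [hz1, hz2]
        exact hxy
    · have h1 : z k = z' (k - 2) := by
        simp only [hz]; rw [if_neg (by omega), if_neg (by omega)]
      have h2 : z (k + 1) = z' (k - 1) := by
        simp only [hz]; rw [if_neg (by omega), if_neg (by omega),
          show k + 1 - 2 = k - 1 from by omega]
      rw [h1, h2]
      have := hadj' (k - 2) (by omega)
      have h3 : k - 2 + 1 = k - 1 := by omega
      rwa [h3] at this
  have := chain_exact hconn hreg hBM hD hL hp z hz0 hzL hadj 1 (by omega)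
  rw [hz1, show (1:ℕ) + 1 = 2 from rfl, hz2] at this
  exact this

/-- From exact Wasserstein value and exact dual value, get an almost-radial plan. -/
lemma radial_plan (hconn : G.Connected) (hreg : G.IsRegularOfDegree D) {x0 a b : V}
    {cc : ℝ} (hW : W1 G D a b = cc) (hE : erho G D x0 b - erho G D x0 a = cc)
    {ε : ℝ} (hε : 0 < ε) :
    ∃ π, IsPlan G D a b π ∧ ∀ u v,
      ((G.dist u v : ℝ) - ((G.dist x0 v : ℝ) - (G.dist x0 u : ℝ))) * π u v ≤ ε := by
  obtain ⟨π, hπ, hc⟩ := exists_plan_cst_lt hconn hreg hε a b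
  refine ⟨π, hπ, ?_⟩
  have hdual : erho G D x0 b - erho G D x0 a ≤ cst G π :=
    dual_le_cst (fun v => (G.dist x0 v : ℝ)) (rho_lip hconn x0) hπ
  have hsum : ∑ u, ∑ v, ((G.dist u v : ℝ) - ((G.dist x0 v : ℝ) - (G.dist x0 u : ℝ))) * π u v
      ≤ ε := by
    have hexp : ∑ u, ∑ v, ((G.dist u v : ℝ) - ((G.dist x0 v : ℝ) - (G.dist x0 u : ℝ))) * π u v
        = cst G π - ((∑ v, mu G D b v * (G.dist x0 v : ℝ))
          - (∑ u, mu G D a u * (G.dist x0 u : ℝ))) := by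
      have hb : ∑ v, mu G D b v * (G.dist x0 v : ℝ) = ∑ u, ∑ v, π u v * (G.dist x0 v : ℝ) := by
        rw [Finset.sum_comm]
        apply Finset.sum_congr rfl; intro v _
        rw [← hπ.2.2 v, Finset.sum_mul]
      have ha : ∑ u, mu G D a u * (G.dist x0 u : ℝ) = ∑ u, ∑ v, π u v * (G.dist x0 u : ℝ) := by
        apply Finset.sum_congr rfl; intro u _
        rw [← hπ.2.1 u, Finset.sum_mul]
      rw [hb, ha]
      unfold cst
      rw [← Finset.sum_sub_distrib, ← Finset.sum_sub_distrib]
      apply Finset.sum_congr rfl; intro u _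
      rw [← Finset.sum_sub_distrib, ← Finset.sum_sub_distrib]
      apply Finset.sum_congr rfl; intro v _
      ring
    rw [hexp]
    have : erho G D x0 b - erho G D x0 a = (∑ v, mu G D b v * (G.dist x0 v : ℝ))
        - (∑ u, mu G D a u * (G.dist x0 u : ℝ)) := rfl
    rw [← this, hE]
    rw [hW] at hc
    linarith
  intro u v
  have hnn : ∀ u' v', 0 ≤ ((G.dist u' v' : ℝ) - ((G.dist x0 v' : ℝ) - (G.dist x0 u' : ℝ)))
      * π u' v' := by
    intro u' v'
    apply mul_nonneg _ (hπ.1 u' v')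
    have := rho_lip hconn x0 u' v'
    linarith
  calc ((G.dist u v : ℝ) - ((G.dist x0 v : ℝ) - (G.dist x0 u : ℝ))) * π u v
      ≤ ∑ v', ((G.dist u v' : ℝ) - ((G.dist x0 v' : ℝ) - (G.dist x0 u : ℝ))) * π u v' :=
        Finset.single_le_sum (fun v' _ => hnn u v') (Finset.mem_univ v)
    _ ≤ ∑ u', ∑ v', ((G.dist u' v' : ℝ) - ((G.dist x0 v' : ℝ) - (G.dist x0 u' : ℝ))) * π u' v' :=
        Finset.single_le_sum (f := fun u' => ∑ v', ((G.dist u' v' : ℝ)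
          - ((G.dist x0 v' : ℝ) - (G.dist x0 u' : ℝ))) * π u' v')
          (fun u' _ => Finset.sum_nonneg (fun v' _ => hnn u' v')) (Finset.mem_univ u)
    _ ≤ ε := hsum

end EdgeExact

section Existence

variable [Fintype V] {G : SimpleGraph V} {D L : ℕ}

lemma exists_common (hconn : G.Connected) (hreg : G.IsRegularOfDegree D)
    (hBM : BMSharp G D L) (hD : 0 < D) (hL : 0 < L) {x0 p x1 xb1 : V}
    (hp : G.dist x0 p = L) (hx1 : G.dist x0 x1 = 1) (hxb1 : G.dist x0 xb1 = 1)
    (hne : x1 ≠ xb1) (hnadj : ¬ G.Adj x1 xb1) :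
    ∃ y, G.dist x0 y = 2 ∧ G.Adj x1 y ∧ G.Adj xb1 y := by
  have hD1 : (0:ℝ) < (D:ℝ) + 1 := Dp1_pos
  obtain ⟨hW, hE⟩ := edge_exact_S1 hconn hreg hBM hD hL hp hx1
  have hNpos : 0 < Fintype.card V := Fintype.card_pos_iff.mpr ⟨x1⟩
  set N : ℝ := (Fintype.card V : ℝ) with hN
  have hNpos' : (0:ℝ) < N := by rw [hN]; exact_mod_cast hNpos
  set ε : ℝ := 1 / (2 * N * ((D:ℝ) + 1)) with hε
  have hεpos : 0 < ε := by rw [hε]; positivity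
  obtain ⟨π, hπ, hgap⟩ := radial_plan (x0 := x0) hconn hreg hW hE hεpos
  by_contra hno
  push_neg at hno
  have hd2 : 2 ≤ G.dist x1 xb1 := by
    have h0 : G.dist x1 xb1 ≠ 0 := fun h => hne (hconn.dist_eq_zero_iff.mp h)
    have h1 : G.dist x1 xb1 ≠ 1 := fun h => hnadj (SimpleGraph.dist_eq_one_iff_adj.mp h)
    omega
  have key : ∀ v, π xb1 v ≤ ε := by
    intro v
    by_cases hmu : mu G D x1 v = 0
    · rw [plan_col_zero hπ hmu xb1]
      exact le_of_lt hεpos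
    · have hdv : G.dist x1 v ≤ 1 := (mu_ne_zero_iff x1 v).mp hmu
      have hρv : G.dist x0 v ≤ 2 := by
        have := hconn.dist_triangle (u := x0) (v := x1) (w := v)
        omega
      have hvne : v ≠ xb1 := by
        intro h
        rw [h] at hdv
        omega
      have hkey : G.dist x0 v ≤ G.dist xb1 v := by
        by_contra hcon
        have htri : G.dist x0 v ≤ G.dist x0 xb1 + G.dist xb1 v := hconn.dist_triangle
        rw [hxb1] at htri
        have heq : G.dist x0 v = G.dist xb1 v + 1 := by omega
        have hbpos : G.dist xb1 v ≠ 0 := fun h => hvne (hconn.dist_eq_zero_iff.mp h).symm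
        have hb1 : G.dist xb1 v = 1 := by omega
        have hρ2 : G.dist x0 v = 2 := by omega
        have hadjb : G.Adj xb1 v := SimpleGraph.dist_eq_one_iff_adj.mp hb1
        have hvnex1 : v ≠ x1 := by
          intro h; rw [h, hx1] at hρ2; omega
        have hdx1 : G.dist x1 v = 1 := by
          have h0 : G.dist x1 v ≠ 0 := fun h => hvnex1 (hconn.dist_eq_zero_iff.mp h).symm
          omega
        exact hno v hρ2 (SimpleGraph.dist_eq_one_iff_adj.mp hdx1) hadjb
      have h1le : (1:ℝ) ≤ (G.dist xb1 v : ℝ) - ((G.dist x0 v : ℝ) - (G.dist x0 xb1 : ℝ)) := by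
        rw [hxb1]
        have : (G.dist x0 v : ℝ) ≤ (G.dist xb1 v : ℝ) := by exact_mod_cast hkey
        push_cast
        linarith
      have := hgap xb1 v
      nlinarith [hπ.1 xb1 v]
  have hrow : ∑ v, π xb1 v = 1 / ((D:ℝ) + 1) := by
    rw [hπ.2.1 xb1, mu_eq_of_le x0 xb1 (by rw [hxb1])]
  have hub : (1:ℝ) / ((D:ℝ) + 1) ≤ N * ε := by
    calc (1:ℝ) / ((D:ℝ) + 1) = ∑ v, π xb1 v := hrow.symm
      _ ≤ ∑ _v : V, ε := Finset.sum_le_sum (fun v _ => key v)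
      _ = N * ε := by
        rw [Finset.sum_const, nsmul_eq_mul, hN, Finset.card_univ]
  have hNε : N * ε = 1 / (2 * ((D:ℝ) + 1)) := by
    rw [hε]
    field_simp
  rw [hNε] at hub
  rw [div_le_div_iff₀ hD1 (by positivity)] at hub
  linarith

end Existence

section Unique

variable [Fintype V] {G : SimpleGraph V} {D L : ℕ}

lemma U_card_le_one (hconn : G.Connected) (hreg : G.IsRegularOfDegree D)
    (hBM : BMSharp G D L) (hD : 0 < D) (hL : 0 < L) (hL2 : 2 ≤ L) {x0 p u y : V}
    (hp : G.dist x0 p = L) (hu : G.dist x0 u = 1) (hy : G.dist x0 y = 2) (huy : G.Adj u y) :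
    (Finset.univ.filter
      (fun u' => G.dist x0 u' = 1 ∧ G.Adj u' y ∧ ¬ G.Adj u u' ∧ u' ≠ u)).card ≤ 1 := by
  rw [Finset.card_le_one]
  intro a ha b hb
  by_contra hab
  obtain ⟨-, ha1, ha2, ha3, ha4⟩ := Finset.mem_filter.mp ha
  obtain ⟨-, hb1, hb2, hb3, hb4⟩ := Finset.mem_filter.mp hb
  have hD1 : (0:ℝ) < (D:ℝ) + 1 := Dp1_pos
  obtain ⟨hW, hE⟩ := edge_exact_S2 hconn hreg hBM hD hL hL2 hp hu hy huy
  have hNpos : 0 < Fintype.card V := Fintype.card_pos_iff.mpr ⟨u⟩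
  set N : ℝ := (Fintype.card V : ℝ) with hN
  have hNpos' : (0:ℝ) < N := by rw [hN]; exact_mod_cast hNpos
  set ε : ℝ := 1 / (4 * N * ((D:ℝ) + 1)) with hε
  have hεpos : 0 < ε := by rw [hε]; positivity
  obtain ⟨π, hπ, hgap⟩ := radial_plan (x0 := x0) hconn hreg hW hE hεpos
  -- main claim: the mass of a "bad" vertex comes almost entirely from x0
  have main : ∀ u', G.dist x0 u' = 1 → G.Adj u' y → ¬ G.Adj u u' → u' ≠ u →
      1 / ((D:ℝ) + 1) - N * ε ≤ π x0 u' := by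
    intro u' h1 h2 h3 h4
    have hcol : ∑ w, π w u' = 1 / ((D:ℝ) + 1) := by
      rw [hπ.2.2 u', mu_eq_of_le y u'
        (le_of_eq (SimpleGraph.dist_eq_one_iff_adj.mpr h2.symm))]
    have hterm : ∀ w, w ≠ x0 → π w u' ≤ ε := by
      intro w hw
      by_cases hmu : mu G D u w = 0
      · rw [plan_row_zero hπ hmu u']
        exact le_of_lt hεpos
      · have hdw : G.dist u w ≤ 1 := (mu_ne_zero_iff u w).mp hmu
        have hρw : 1 ≤ G.dist x0 w := by
          have h0 : G.dist x0 w ≠ 0 := fun h => hw (hconn.dist_eq_zero_iff.mp h).symm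
          omega
        have hdwu' : 1 ≤ G.dist w u' := by
          have h0 : G.dist w u' ≠ 0 := by
            intro h
            have : w = u' := hconn.dist_eq_zero_iff.mp h
            rw [this] at hdw
            have hduu' : G.dist u u' ≠ 0 := fun hh => h4 (hconn.dist_eq_zero_iff.mp hh).symm
            have hduu1 : G.dist u u' ≠ 1 := fun hh => h3 (SimpleGraph.dist_eq_one_iff_adj.mp hh)
            have : G.dist u u' = G.dist u w := by rw [this]
            omega
          omega
        have h1le : (1:ℝ) ≤ (G.dist w u' : ℝ) - ((G.dist x0 u' : ℝ) - (G.dist x0 w : ℝ)) := by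
          rw [h1]
          have c1 : (1:ℝ) ≤ (G.dist w u' : ℝ) := by exact_mod_cast hdwu'
          have c2 : (1:ℝ) ≤ (G.dist x0 w : ℝ) := by exact_mod_cast hρw
          push_cast
          linarith
        have := hgap w u'
        nlinarith [hπ.1 w u']
    have hsplit : π x0 u' + ∑ w ∈ Finset.univ.erase x0, π w u' = ∑ w, π w u' :=
      Finset.add_sum_erase Finset.univ (fun w => π w u') (Finset.mem_univ x0)
    have herr : ∑ w ∈ Finset.univ.erase x0, π w u' ≤ N * ε := by
      have h5 := Finset.sum_le_card_nsmul (Finset.univ.erase x0) (fun w => π w u') ε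
        (fun w hw => hterm w (Finset.ne_of_mem_erase hw))
      rw [nsmul_eq_mul] at h5
      have h6 : ((Finset.univ.erase x0).card : ℝ) ≤ N := by
        rw [hN]
        have := Finset.card_erase_le (a := x0) (s := Finset.univ)
        calc ((Finset.univ.erase x0).card : ℝ) ≤ (Finset.univ.card : ℝ) := by exact_mod_cast this
          _ = (Fintype.card V : ℝ) := by rw [Finset.card_univ]
      calc ∑ w ∈ Finset.univ.erase x0, π w u' ≤ ((Finset.univ.erase x0).card : ℝ) * ε := h5
        _ ≤ N * ε := by nlinarith
    linarith [hcol ▸ hsplit]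
  have hma := main a ha1 ha2 ha3 ha4
  have hmb := main b hb1 hb2 hb3 hb4
  have hrowx0 : ∑ v, π x0 v = 1 / ((D:ℝ) + 1) := by
    rw [hπ.2.1 x0, mu_eq_of_le u x0 (by rw [SimpleGraph.dist_comm, hu])]
  have hpair : π x0 a + π x0 b ≤ ∑ v, π x0 v := by
    have h7 : ∑ v ∈ ({a, b} : Finset V), π x0 v = π x0 a + π x0 b :=
      Finset.sum_pair hab
    rw [← h7]
    apply Finset.sum_le_sum_of_subset_of_nonneg (Finset.subset_univ _)
    intro v _ _
    exact hπ.1 x0 v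
  have hNε : N * ε = 1 / (4 * ((D:ℝ) + 1)) := by
    rw [hε]
    field_simp
  rw [hrowx0] at hpair
  rw [hNε] at hma hmb
  have hq : (1:ℝ) / ((D:ℝ) + 1) ≤ 2 * (1 / (4 * ((D:ℝ) + 1))) := by linarith
  have hq2 : 2 * (1 / (4 * ((D:ℝ) + 1))) = 1 / (2 * ((D:ℝ) + 1)) := by
    field_simp
    ring
  rw [hq2] at hq
  rw [div_le_div_iff₀ hD1 (by positivity)] at hq
  linarith

end Unique

section Counting

variable [Fintype V] {G : SimpleGraph V} {D L : ℕ}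

lemma NA_card_eq_out_card (hconn : G.Connected) (hreg : G.IsRegularOfDegree D)
    {x0 u : V} (hu : G.dist x0 u = 1) :
    (Finset.univ.filter (fun u' => G.dist x0 u' = 1 ∧ u' ≠ u ∧ ¬ G.Adj u u')).card
      = (Finset.univ.filter (fun y => G.dist x0 y = 2 ∧ G.Adj u y)).card := by
  have hadjx0u : G.Adj u x0 := (SimpleGraph.dist_eq_one_iff_adj.mp hu).symm
  set a : ℕ := (Finset.univ.filter (fun w => G.dist x0 w = 1 ∧ G.Adj u w)).card with hadef
  -- first partition : vertices at distance 1 from x0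
  have h1 : D = 1 + a + (Finset.univ.filter
      (fun u' => G.dist x0 u' = 1 ∧ u' ≠ u ∧ ¬ G.Adj u u')).card := by
    have hS1 : (Finset.univ.filter (fun v => G.dist x0 v = 1)).card = D := by
      have he : Finset.univ.filter (fun v => G.dist x0 v = 1) = G.neighborFinset x0 := by
        ext v
        simp [SimpleGraph.mem_neighborFinset, SimpleGraph.dist_eq_one_iff_adj]
      rw [he, G.card_neighborFinset_eq_degree, hreg x0]
    have hpt : ∀ v : V, (if G.dist x0 v = 1 then 1 else 0)
        = (if (v = u ∧ G.dist x0 v = 1) then 1 else 0)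
          + (if (G.dist x0 v = 1 ∧ G.Adj u v) then 1 else 0)
          + (if (G.dist x0 v = 1 ∧ v ≠ u ∧ ¬ G.Adj u v) then (1:ℕ) else 0) := by
      intro v
      by_cases hd : G.dist x0 v = 1
      · by_cases hv : v = u
        · have hnadj : ¬ G.Adj u v := by rw [hv]; exact G.irrefl
          rw [if_pos hd, if_pos ⟨hv, hd⟩, if_neg (fun h => hnadj h.2),
            if_neg (fun h => h.2.1 hv)]
        · by_cases hA : G.Adj u v
          · rw [if_pos hd, if_neg (fun h => hv h.1), if_pos ⟨hd, hA⟩,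
              if_neg (fun h => h.2.2 hA)]
          · rw [if_pos hd, if_neg (fun h => hv h.1), if_neg (fun h => hA h.2),
              if_pos ⟨hd, hv, hA⟩]
      · rw [if_neg hd, if_neg (fun h => hd h.2), if_neg (fun h => hd h.1),
          if_neg (fun h => hd h.1)]
    have hsum : (Finset.univ.filter (fun v => G.dist x0 v = 1)).card
        = (Finset.univ.filter (fun v => v = u ∧ G.dist x0 v = 1)).card
          + (Finset.univ.filter (fun w => G.dist x0 w = 1 ∧ G.Adj u w)).card
          + (Finset.univ.filter
            (fun u' => G.dist x0 u' = 1 ∧ u' ≠ u ∧ ¬ G.Adj u u')).card := by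
      rw [Finset.card_filter, Finset.card_filter, Finset.card_filter, Finset.card_filter,
        ← Finset.sum_add_distrib, ← Finset.sum_add_distrib]
      exact Finset.sum_congr rfl (fun v _ => hpt v)
    have hsingle : Finset.univ.filter (fun v => v = u ∧ G.dist x0 v = 1) = {u} := by
      ext v
      simp only [Finset.mem_filter, Finset.mem_univ, true_and, Finset.mem_singleton]
      constructor
      · exact fun h => h.1
      · rintro rfl; exact ⟨rfl, hu⟩
    rw [hsingle, Finset.card_singleton] at hsum
    omega
  -- second partition : neighbours of u
  have h2 : D = 1 + a + (Finset.univ.filter (fun y => G.dist x0 y = 2 ∧ G.Adj u y)).card := by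
    have hNu : (Finset.univ.filter (fun w => G.Adj u w)).card = D := by
      have he : Finset.univ.filter (fun w => G.Adj u w) = G.neighborFinset u := by
        ext w
        simp [SimpleGraph.mem_neighborFinset]
      rw [he, G.card_neighborFinset_eq_degree, hreg u]
    have hpt : ∀ w : V, (if G.Adj u w then 1 else 0)
        = (if (w = x0 ∧ G.Adj u w) then 1 else 0)
          + (if (G.dist x0 w = 1 ∧ G.Adj u w) then 1 else 0)
          + (if (G.dist x0 w = 2 ∧ G.Adj u w) then (1:ℕ) else 0) := by
      intro w
      by_cases hA : G.Adj u w
      · have hle : G.dist x0 w ≤ 2 := by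
          have t1 : G.dist x0 w ≤ G.dist x0 u + G.dist u w := hconn.dist_triangle
          have t2 : G.dist u w = 1 := SimpleGraph.dist_eq_one_iff_adj.mpr hA
          omega
        by_cases hw0 : w = x0
        · have hd0 : G.dist x0 w = 0 := by rw [hw0, SimpleGraph.dist_self]
          rw [if_pos hA, if_pos ⟨hw0, hA⟩, if_neg (fun h => by omega),
            if_neg (fun h => by omega)]
        · have hd0 : G.dist x0 w ≠ 0 := fun h => hw0 (hconn.dist_eq_zero_iff.mp h).symm
          by_cases hd1 : G.dist x0 w = 1
          · rw [if_pos hA, if_neg (fun h => hw0 h.1), if_pos ⟨hd1, hA⟩,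
              if_neg (fun h => by omega)]
          · have hd2 : G.dist x0 w = 2 := by omega
            rw [if_pos hA, if_neg (fun h => hw0 h.1), if_neg (fun h => hd1 h.1),
              if_pos ⟨hd2, hA⟩]
      · rw [if_neg hA, if_neg (fun h => hA h.2), if_neg (fun h => hA h.2),
          if_neg (fun h => hA h.2)]
    have hsum : (Finset.univ.filter (fun w => G.Adj u w)).card
        = (Finset.univ.filter (fun w => w = x0 ∧ G.Adj u w)).card
          + (Finset.univ.filter (fun w => G.dist x0 w = 1 ∧ G.Adj u w)).card
          + (Finset.univ.filter (fun y => G.dist x0 y = 2 ∧ G.Adj u y)).card := by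
      rw [Finset.card_filter, Finset.card_filter, Finset.card_filter, Finset.card_filter,
        ← Finset.sum_add_distrib, ← Finset.sum_add_distrib]
      exact Finset.sum_congr rfl (fun w _ => hpt w)
    have hsingle : Finset.univ.filter (fun w => w = x0 ∧ G.Adj u w) = {x0} := by
      ext w
      simp only [Finset.mem_filter, Finset.mem_univ, true_and, Finset.mem_singleton]
      constructor
      · exact fun h => h.1
      · rintro rfl; exact ⟨rfl, hadjx0u⟩
    rw [hsingle, Finset.card_singleton] at hsum
    omega
  omega

lemma exchange_sum {x0 u : V} :
    ∑ u' ∈ Finset.univ.filter (fun u' => G.dist x0 u' = 1 ∧ u' ≠ u ∧ ¬ G.Adj u u'),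
      (Finset.univ.filter (fun y => G.dist x0 y = 2 ∧ G.Adj u y ∧ G.Adj u' y)).card
    = ∑ y ∈ Finset.univ.filter (fun y => G.dist x0 y = 2 ∧ G.Adj u y),
      (Finset.univ.filter
        (fun u' => G.dist x0 u' = 1 ∧ G.Adj u' y ∧ ¬ G.Adj u u' ∧ u' ≠ u)).card := by
  have L1 : ∑ u' ∈ Finset.univ.filter (fun u' => G.dist x0 u' = 1 ∧ u' ≠ u ∧ ¬ G.Adj u u'),
      (Finset.univ.filter (fun y => G.dist x0 y = 2 ∧ G.Adj u y ∧ G.Adj u' y)).card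
      = ∑ u' : V, ∑ y : V, (if ((G.dist x0 u' = 1 ∧ u' ≠ u ∧ ¬ G.Adj u u')
          ∧ (G.dist x0 y = 2 ∧ G.Adj u y ∧ G.Adj u' y)) then 1 else 0) := by
    rw [Finset.sum_filter]
    apply Finset.sum_congr rfl; intro u' _
    by_cases h : (G.dist x0 u' = 1 ∧ u' ≠ u ∧ ¬ G.Adj u u')
    · rw [if_pos h, Finset.card_filter]
      apply Finset.sum_congr rfl; intro y _
      by_cases h2 : (G.dist x0 y = 2 ∧ G.Adj u y ∧ G.Adj u' y)
      · rw [if_pos h2, if_pos ⟨h, h2⟩]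
      · rw [if_neg h2, if_neg (fun hc => h2 hc.2)]
    · rw [if_neg h]
      symm
      apply Finset.sum_eq_zero
      intro y _
      rw [if_neg (fun hc => h hc.1)]
  have L2 : ∑ y ∈ Finset.univ.filter (fun y => G.dist x0 y = 2 ∧ G.Adj u y),
      (Finset.univ.filter
        (fun u' => G.dist x0 u' = 1 ∧ G.Adj u' y ∧ ¬ G.Adj u u' ∧ u' ≠ u)).card
      = ∑ y : V, ∑ u' : V, (if ((G.dist x0 u' = 1 ∧ u' ≠ u ∧ ¬ G.Adj u u')
          ∧ (G.dist x0 y = 2 ∧ G.Adj u y ∧ G.Adj u' y)) then 1 else 0) := by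
    rw [Finset.sum_filter]
    apply Finset.sum_congr rfl; intro y _
    by_cases h : (G.dist x0 y = 2 ∧ G.Adj u y)
    · rw [if_pos h, Finset.card_filter]
      apply Finset.sum_congr rfl; intro u' _
      by_cases h2 : (G.dist x0 u' = 1 ∧ G.Adj u' y ∧ ¬ G.Adj u u' ∧ u' ≠ u)
      · rw [if_pos h2, if_pos ⟨⟨h2.1, h2.2.2.2, h2.2.2.1⟩, h.1, h.2, h2.2.1⟩]
      · rw [if_neg h2]
        rw [if_neg (fun hc => h2 ⟨hc.1.1, hc.2.2.2, hc.1.2.2, hc.1.2.1⟩)]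
    · rw [if_neg h]
      symm
      apply Finset.sum_eq_zero
      intro u' _
      rw [if_neg (fun hc => h ⟨hc.2.1, hc.2.2.1⟩)]
  rw [L1, L2, Finset.sum_comm]

end Counting

/-- Number of neighbors of `y` at distance `k` from `x0`. -/
noncomputable def sphDeg (G : SimpleGraph V) [Fintype V] (x0 y : V) (k : ℕ) : ℕ :=
  (Finset.univ.filter (fun v => G.Adj y v ∧ G.dist x0 v = k)).card

/-- Number of triangles containing the edge `x ~ y` (common neighbors of `x` and `y`). -/
noncomputable def tri (G : SimpleGraph V) [Fintype V] (x y : V) : ℕ :=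
  (Finset.univ.filter (fun v => G.Adj x v ∧ G.Adj y v)).card

/-- A good optimal transport map from `B_1(a)` to `B_1(b)`: a bijection between the 1-balls,
fixing exactly the vertices of `B_1(a) ∩ B_1(b)` (among the domain), whose cost realizes
the Wasserstein distance `W1 (μ_a, μ_b)`. -/
def goodMap (G : SimpleGraph V) [Fintype V] (D : ℕ) (a b : V) (T : V → V) : Prop :=
  Set.BijOn T {v | G.dist a v ≤ 1} {v | G.dist b v ≤ 1} ∧
  (∀ v, G.dist a v ≤ 1 → (T v = v ↔ G.dist b v ≤ 1)) ∧
  (1 / (D + 1 : ℝ)) *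
      ∑ v ∈ Finset.univ.filter (fun v => G.dist a v ≤ 1), (G.dist v (T v) : ℝ) =
    W1 G D a b

theorem stmt [Fintype V] (G : SimpleGraph V) (hconn : G.Connected)
    (D L : ℕ) (hD : 0 < D) (hL : 0 < L) (hreg : G.IsRegularOfDegree D)
    (hdiam : G.diam = L) (hBM : BMSharp G D L)
    (x0 : V) (hpole : ∃ p, G.dist x0 p = L)
    (x1 xb1 : V) (hx1 : G.dist x0 x1 = 1) (hxb1 : G.dist x0 xb1 = 1)
    (hne : x1 ≠ xb1) (hnadj : ¬ G.Adj x1 xb1) :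
    ∃! x2 : V, G.dist x0 x2 = 2 ∧ G.Adj x1 x2 ∧ G.Adj xb1 x2 := by
  classical
  obtain ⟨p, hp⟩ := hpole
  have hd2 : 2 ≤ G.dist x1 xb1 := by
    have h0 : G.dist x1 xb1 ≠ 0 := fun h => hne (hconn.dist_eq_zero_iff.mp h)
    have h1 : G.dist x1 xb1 ≠ 1 := fun h => hnadj (SimpleGraph.dist_eq_one_iff_adj.mp h)
    omega
  have hL2 : 2 ≤ L := by
    have hne_top : G.ediam ≠ ⊤ :=
      SimpleGraph.ediam_ne_top_of_diam_ne_zero (by rw [hdiam]; omega)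
    have := SimpleGraph.dist_le_diam hne_top (u := x1) (v := xb1)
    rw [hdiam] at this
    omega
  -- lower bound : every non-adjacent pair in S1 has a common neighbour in S2
  have hlow : ∀ u u' : V, G.dist x0 u = 1 → G.dist x0 u' = 1 → u' ≠ u → ¬ G.Adj u u' →
      1 ≤ (Finset.univ.filter
        (fun y => G.dist x0 y = 2 ∧ G.Adj u y ∧ G.Adj u' y)).card := by
    intro u u' h1 h2 h3 h4
    obtain ⟨y, hy1, hy2, hy3⟩ :=
      exists_common hconn hreg hBM hD hL hp h1 h2 (Ne.symm h3) h4
    exact Finset.card_pos.mpr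
      ⟨y, Finset.mem_filter.mpr ⟨Finset.mem_univ y, hy1, hy2, hy3⟩⟩
  -- the two-sided counting argument
  have hfg_ge : ∀ u ∈ Finset.univ.filter (fun v => G.dist x0 v = 1),
      (∑ _u' ∈ Finset.univ.filter (fun u' => G.dist x0 u' = 1 ∧ u' ≠ u ∧ ¬ G.Adj u u'), 1)
      ≤ ∑ u' ∈ Finset.univ.filter (fun u' => G.dist x0 u' = 1 ∧ u' ≠ u ∧ ¬ G.Adj u u'),
          (Finset.univ.filter (fun y => G.dist x0 y = 2 ∧ G.Adj u y ∧ G.Adj u' y)).card := by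
    intro u hu
    have hu1 : G.dist x0 u = 1 := (Finset.mem_filter.mp hu).2
    apply Finset.sum_le_sum
    intro u' hu'
    obtain ⟨-, h1, h2, h3⟩ := Finset.mem_filter.mp hu'
    exact hlow u u' hu1 h1 h2 h3
  have hfg_le : ∑ u ∈ Finset.univ.filter (fun v => G.dist x0 v = 1),
      (∑ u' ∈ Finset.univ.filter (fun u' => G.dist x0 u' = 1 ∧ u' ≠ u ∧ ¬ G.Adj u u'),
        (Finset.univ.filter (fun y => G.dist x0 y = 2 ∧ G.Adj u y ∧ G.Adj u' y)).card)
      ≤ ∑ u ∈ Finset.univ.filter (fun v => G.dist x0 v = 1),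
        (∑ _u' ∈ Finset.univ.filter (fun u' => G.dist x0 u' = 1 ∧ u' ≠ u ∧ ¬ G.Adj u u'),
          1) := by
    apply Finset.sum_le_sum
    intro u hu
    have hu1 : G.dist x0 u = 1 := (Finset.mem_filter.mp hu).2
    rw [exchange_sum]
    have hstep : ∑ y ∈ Finset.univ.filter (fun y => G.dist x0 y = 2 ∧ G.Adj u y),
        (Finset.univ.filter
          (fun u' => G.dist x0 u' = 1 ∧ G.Adj u' y ∧ ¬ G.Adj u u' ∧ u' ≠ u)).card
        ≤ ∑ _y ∈ Finset.univ.filter (fun y => G.dist x0 y = 2 ∧ G.Adj u y), 1 := by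
      apply Finset.sum_le_sum
      intro y hy
      obtain ⟨-, hy1, hy2⟩ := Finset.mem_filter.mp hy
      exact U_card_le_one hconn hreg hBM hD hL hL2 hp hu1 hy1 hy2
    calc _ ≤ _ := hstep
      _ = (Finset.univ.filter (fun y => G.dist x0 y = 2 ∧ G.Adj u y)).card := by
          rw [Finset.sum_const, smul_eq_mul, mul_one]
      _ = (Finset.univ.filter
          (fun u' => G.dist x0 u' = 1 ∧ u' ≠ u ∧ ¬ G.Adj u u')).card :=
          (NA_card_eq_out_card hconn hreg hu1).symm
      _ = ∑ _u' ∈ Finset.univ.filter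
          (fun u' => G.dist x0 u' = 1 ∧ u' ≠ u ∧ ¬ G.Adj u u'), 1 := by
          rw [Finset.sum_const, smul_eq_mul, mul_one]
  have hsum_eq : ∑ u ∈ Finset.univ.filter (fun v => G.dist x0 v = 1),
      (∑ _u' ∈ Finset.univ.filter (fun u' => G.dist x0 u' = 1 ∧ u' ≠ u ∧ ¬ G.Adj u u'), 1)
      = ∑ u ∈ Finset.univ.filter (fun v => G.dist x0 v = 1),
        (∑ u' ∈ Finset.univ.filter (fun u' => G.dist x0 u' = 1 ∧ u' ≠ u ∧ ¬ G.Adj u u'),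
          (Finset.univ.filter (fun y => G.dist x0 y = 2 ∧ G.Adj u y ∧ G.Adj u' y)).card) :=
    le_antisymm (Finset.sum_le_sum hfg_ge) hfg_le
  have hall := (Finset.sum_eq_sum_iff_of_le hfg_ge).mp hsum_eq
  have hx1S1 : x1 ∈ Finset.univ.filter (fun v => G.dist x0 v = 1) :=
    Finset.mem_filter.mpr ⟨Finset.mem_univ x1, hx1⟩
  have hx1eq := hall x1 hx1S1
  have hinner : ∀ u' ∈ Finset.univ.filter
      (fun u' => G.dist x0 u' = 1 ∧ u' ≠ x1 ∧ ¬ G.Adj x1 u'),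
      1 ≤ (Finset.univ.filter
        (fun y => G.dist x0 y = 2 ∧ G.Adj x1 y ∧ G.Adj u' y)).card := by
    intro u' hu'
    obtain ⟨-, h1, h2, h3⟩ := Finset.mem_filter.mp hu'
    exact hlow x1 u' hx1 h1 h2 h3
  have hone := (Finset.sum_eq_sum_iff_of_le hinner).mp hx1eq
  have hxb1NA : xb1 ∈ Finset.univ.filter
      (fun u' => G.dist x0 u' = 1 ∧ u' ≠ x1 ∧ ¬ G.Adj x1 u') :=
    Finset.mem_filter.mpr ⟨Finset.mem_univ xb1, hxb1, Ne.symm hne, hnadj⟩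
  have hcard1 : (Finset.univ.filter
      (fun y => G.dist x0 y = 2 ∧ G.Adj x1 y ∧ G.Adj xb1 y)).card = 1 :=
    (hone xb1 hxb1NA).symm
  obtain ⟨y0, hy0⟩ := Finset.card_eq_one.mp hcard1
  refine ⟨y0, ?_, ?_⟩
  · have hmem : y0 ∈ Finset.univ.filter
        (fun y => G.dist x0 y = 2 ∧ G.Adj x1 y ∧ G.Adj xb1 y) := by
      rw [hy0]
      exact Finset.mem_singleton_self y0
    exact (Finset.mem_filter.mp hmem).2
  · intro y' hy'
    have hmem : y' ∈ Finset.univ.filter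
        (fun y => G.dist x0 y = 2 ∧ G.Adj x1 y ∧ G.Adj xb1 y) :=
      Finset.mem_filter.mpr ⟨Finset.mem_univ y', hy'⟩
    rw [hy0] at hmem
    exact Finset.mem_singleton.mp hmem

end BMS
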